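/- Let A and B be tensors of order m and dimension n with |B| ≤ A entrywise (A nonnegative). Then ρ(B) ≤ ρ(A). Moreover, if A is weakly irreducible and ρ(B) = ρ(A), with λ = ρ(A)e^{iθ} an eigenvalue of B corresponding to eigenvector y, then every entry of y is nonzero and A = e^{-iθ} D^{-(m-1)} B D where D = diag(y₁/|y₁|, …, y_n/|y_n|). -/

import Mathlib

open scoped BigOperators

namespace PaperTensor

/-- A tensor of order `m` and dimension `|ι|`: entry `A i f` is `a_{i, f 0, …, f (m-2)}`. -/
abbrev Tensor (ι : Type) (m : ℕ) : Type := ι → (Fin (m - 1) → ι) → ℂ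

variable {ι : Type} [Fintype ι] {m : ℕ}

/-- `(A x^{m-1})_i = ∑ a_{i i₂ … i_m} x_{i₂} ⋯ x_{i_m}`. -/
noncomputable def tApp (A : Tensor ι m) (x : ι → ℂ) (i : ι) : ℂ :=
  ∑ f : Fin (m - 1) → ι, A i f * ∏ j, x (f j)

/-- `x ≠ 0` and `A x^{m-1} = l x^{[m-1]}`. -/
def IsEigPair (A : Tensor ι m) (l : ℂ) (x : ι → ℂ) : Prop :=
  x ≠ 0 ∧ ∀ i, tApp A x i = l * x i ^ (m - 1)

def Eigenvalues (A : Tensor ι m) : Set ℂ := {l | ∃ x, IsEigPair A l x}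

/-- The spectral radius: the largest modulus of an eigenvalue. -/
noncomputable def specRad (A : Tensor ι m) : ℝ := sSup ((fun z : ℂ => ‖z‖) '' Eigenvalues A)

/-- All entries are nonnegative reals. -/
def Nonneg (A : Tensor ι m) : Prop := ∀ i f, ∃ r : ℝ, 0 ≤ r ∧ A i f = (r : ℂ)

/-- Arc `(i,j)` of the directed graph `G(A)`. -/
def Arc (A : Tensor ι m) (i j : ι) : Prop := ∃ f, A i f ≠ 0 ∧ ∃ k, f k = j

/-- `G(A)` is strongly connected. -/
def WeaklyIrreducible (A : Tensor ι m) : Prop :=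
  ∀ i j : ι, Relation.ReflTransGen (Arc A) i j

/-- The projective eigenvariety `PV_l(A) ⊆ ℙ^{n-1}`. -/
def PV (A : Tensor ι m) (l : ℂ) : Set (Projectivization ℂ (ι → ℂ)) :=
  {p | ∃ (v : ι → ℂ) (hv : v ≠ 0), Projectivization.mk ℂ v hv = p ∧
        ∀ i, tApp A v i = l * v i ^ (m - 1)}

/-- `(D^{-(m-1)} A D)_{i₁…i_m} = d_{i₁}^{-(m-1)} a_{i₁…i_m} d_{i₂} ⋯ d_{i_m}`. -/
noncomputable def diagConj (d : ι → ℂ) (A : Tensor ι m) : Tensor ι m :=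
  fun i f => (d i)⁻¹ ^ (m - 1) * A i f * ∏ j, d (f j)

/-- Combinatorial symmetry: the support is invariant under permutations of indices. -/
def CombSymm (A : Tensor ι m) : Prop :=
  ∀ i f i' f', (i ::ₘ Multiset.map f Finset.univ.val) = (i' ::ₘ Multiset.map f' Finset.univ.val) →
    (A i f ≠ 0 ↔ A i' f' ≠ 0)

/-- Irreducibility of a tensor. -/
def Irred (A : Tensor ι m) : Prop :=
  ¬ ∃ S : Set ι, S.Nonempty ∧ S ≠ Set.univ ∧
      ∀ i ∈ S, ∀ f : Fin (m - 1) → ι, (∀ j, f j ∉ S) → A i f = 0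

/-- Solid arc: `(i,j)` arising from a nonzero entry `a_{ij…j}`. -/
def SolidArc (A : Tensor ι m) (i j : ι) : Prop := A i (fun _ => j) ≠ 0

/-- Spectral `ℓ`-symmetry: `Spec(A) = e^{2πi/ℓ} Spec(A)`. -/
def SpectralSymm (A : Tensor ι m) (ℓ : ℕ) : Prop :=
  Eigenvalues A = (fun z => Complex.exp ((2 * Real.pi / ℓ : ℝ) * Complex.I) * z) '' Eigenvalues A

/-- The set `𝔇^{(j)}(A)` (for the given `ℓ`), as diagonal matrices recorded by their diagonals. -/
def Dgj {n m : ℕ} [NeZero n] (A : Tensor (Fin n) m) (ℓ j : ℕ) : Set (Fin n → ℂ) :=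
  {d | (∀ i, d i ≠ 0) ∧ d 0 = 1 ∧
    ∀ i f, A i f = Complex.exp (-(2 * Real.pi * j / ℓ : ℝ) * Complex.I) * diagConj d A i f}

/-- The group `𝔇(A) = ⋃_{j=0}^{ℓ-1} 𝔇^{(j)}(A)`. -/
def DgAll {n m : ℕ} [NeZero n] (A : Tensor (Fin n) m) (ℓ : ℕ) : Set (Fin n → ℂ) :=
  {d | ∃ j < ℓ, d ∈ Dgj A ℓ j}

/-- `𝔇^{(0)}(A)`. -/
def Dg0 {n m : ℕ} [NeZero n] (A : Tensor (Fin n) m) : Set (Fin n → ℂ) :=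
  {d | (∀ i, d i ≠ 0) ∧ d 0 = 1 ∧ ∀ i f, A i f = diagConj d A i f}

/-- Restriction (principal subtensor) of `A` to a set `S` of indices. -/
def restrict (A : Tensor ι m) (S : Set ι) : Tensor S m :=
  fun i f => A i.1 (fun j => (f j).1)


open Finset

namespace PFAux

variable {n m : ℕ}

/-- real tensor application -/
noncomputable def rApp (M : Fin n → (Fin (m-1) → Fin n) → ℝ) (x : Fin n → ℝ) (i : Fin n) : ℝ :=
  ∑ f : Fin (m-1) → Fin n, M i f * ∏ j, x (f j)

theorem rApp_nonneg {M : Fin n → (Fin (m-1) → Fin n) → ℝ} {x : Fin n → ℝ}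
    (hM : ∀ i f, 0 ≤ M i f) (hx : ∀ i, 0 ≤ x i) (i : Fin n) : 0 ≤ rApp M x i :=
  Finset.sum_nonneg fun f _ => mul_nonneg (hM i f) (Finset.prod_nonneg fun j _ => hx (f j))

theorem term_le_rApp {M : Fin n → (Fin (m-1) → Fin n) → ℝ} {x : Fin n → ℝ}
    (hM : ∀ i f, 0 ≤ M i f) (hx : ∀ i, 0 ≤ x i) (i : Fin n) (f : Fin (m-1) → Fin n) :
    M i f * ∏ j, x (f j) ≤ rApp M x i :=
  Finset.single_le_sum (fun g _ => mul_nonneg (hM i g) (Finset.prod_nonneg fun j _ => hx (g j)))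
    (Finset.mem_univ f)

theorem rApp_mono_x {M : Fin n → (Fin (m-1) → Fin n) → ℝ} {x y : Fin n → ℝ}
    (hM : ∀ i f, 0 ≤ M i f) (hx : ∀ i, 0 ≤ x i) (hxy : ∀ i, x i ≤ y i) (i : Fin n) :
    rApp M x i ≤ rApp M y i :=
  Finset.sum_le_sum fun f _ => mul_le_mul_of_nonneg_left
    (Finset.prod_le_prod (fun j _ => hx (f j)) (fun j _ => hxy (f j))) (hM i f)

theorem rApp_mono_M {M N : Fin n → (Fin (m-1) → Fin n) → ℝ} {x : Fin n → ℝ}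
    (hMN : ∀ i f, M i f ≤ N i f) (hx : ∀ i, 0 ≤ x i) (i : Fin n) :
    rApp M x i ≤ rApp N x i :=
  Finset.sum_le_sum fun f _ => mul_le_mul_of_nonneg_right (hMN i f)
    (Finset.prod_nonneg fun j _ => hx (f j))

theorem rApp_smul (M : Fin n → (Fin (m-1) → Fin n) → ℝ) (x : Fin n → ℝ) (c : ℝ) (i : Fin n) :
    rApp M (fun j => c * x j) i = c ^ (m-1) * rApp M x i := by
  unfold rApp
  rw [Finset.mul_sum]
  refine Finset.sum_congr rfl fun f _ => ?_
  rw [Finset.prod_mul_distrib, Finset.prod_const, Finset.card_univ, Fintype.card_fin]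
  ring

theorem continuous_rApp (M : Fin n → (Fin (m-1) → Fin n) → ℝ) (i : Fin n) :
    Continuous fun x : Fin n → ℝ => rApp M x i := by
  unfold rApp
  exact continuous_finset_sum _ fun f _ =>
    continuous_const.mul (continuous_finset_prod _ fun j _ => continuous_apply (f j))

theorem rApp_add_const (M : Fin n → (Fin (m-1) → Fin n) → ℝ) (c : ℝ) (x : Fin n → ℝ) (i : Fin n) :
    rApp (fun i f => M i f + c) x i = rApp M x i + c * ∑ f : Fin (m-1) → Fin n, ∏ j, x (f j) := by
  unfold rApp
  rw [Finset.mul_sum, ← Finset.sum_add_distrib]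
  exact Finset.sum_congr rfl fun f _ => by ring


/-- if nonneg factors are ≤ positive factors and products agree, factors agree -/
theorem prod_factors_eq {ι : Type*} [Fintype ι] [DecidableEq ι] {a b : ι → ℝ}
    (ha : ∀ j, 0 ≤ a j) (hab : ∀ j, a j ≤ b j) (hb : ∀ j, 0 < b j)
    (h : ∏ j, a j = ∏ j, b j) (j0 : ι) : a j0 = b j0 := by
  by_contra hne
  have hlt : a j0 < b j0 := lt_of_le_of_ne (hab j0) hne
  have h1 : ∏ j, a j = a j0 * ∏ j ∈ Finset.univ.erase j0, a j := by
    rw [← Finset.mul_prod_erase _ _ (Finset.mem_univ j0)]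
  have h2 : ∏ j, b j = b j0 * ∏ j ∈ Finset.univ.erase j0, b j := by
    rw [← Finset.mul_prod_erase _ _ (Finset.mem_univ j0)]
  have hberase : (0:ℝ) < ∏ j ∈ Finset.univ.erase j0, b j :=
    Finset.prod_pos fun j _ => hb j
  have : ∏ j, a j < ∏ j, b j := by
    rw [h1, h2]
    calc a j0 * ∏ j ∈ Finset.univ.erase j0, a j
        ≤ a j0 * ∏ j ∈ Finset.univ.erase j0, b j := by
          exact mul_le_mul_of_nonneg_left
            (Finset.prod_le_prod (fun j _ => ha j) (fun j _ => hab j)) (ha j0)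
      _ < b j0 * ∏ j ∈ Finset.univ.erase j0, b j :=
          mul_lt_mul_of_pos_right hlt hberase
  exact absurd h (ne_of_lt this)

theorem single_mul_min_le_prod (hm : 2 ≤ m) {z : Fin n → ℝ} {μ : ℝ} (hμ : 0 ≤ μ)
    (hz : ∀ i, μ ≤ z i) (f : Fin (m-1) → Fin n) (k : Fin (m-1)) :
    z (f k) * μ ^ (m-2) ≤ ∏ j, z (f j) := by
  rw [← Finset.mul_prod_erase _ _ (Finset.mem_univ k)]
  refine mul_le_mul_of_nonneg_left ?_ (le_trans hμ (hz (f k)))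
  calc μ ^ (m-2) = ∏ _j ∈ Finset.univ.erase k, μ := by
        rw [Finset.prod_const, Finset.card_erase_of_mem (Finset.mem_univ k),
          Finset.card_univ, Fintype.card_fin]
        congr 1
    _ ≤ ∏ j ∈ Finset.univ.erase k, z (f j) :=
        Finset.prod_le_prod (fun j _ => hμ) (fun j _ => hz (f j))

theorem prod_le_pow_max {x : Fin n → ℝ} {c : ℝ} (hx : ∀ i, 0 ≤ x i) (hc : ∀ i, x i ≤ c)
    (f : Fin (m-1) → Fin n) : ∏ j, x (f j) ≤ c ^ (m-1) := by
  calc ∏ j, x (f j) ≤ ∏ _j : Fin (m-1), c :=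
        Finset.prod_le_prod (fun j _ => hx (f j)) (fun j _ => hc (f j))
    _ = c ^ (m-1) := by rw [Finset.prod_const, Finset.card_univ, Fintype.card_fin]

def CWpair (M : Fin n → (Fin (m-1) → Fin n) → ℝ) (μ : ℝ) (u : Fin n → ℝ) : Prop :=
  0 ≤ μ ∧ (∀ i, 0 ≤ u i) ∧ (∃ i, 0 < u i) ∧ ∀ i, μ * u i ^ (m-1) ≤ rApp M u i

/-- a Collatz-Wielandt value is at most some row sum -/
theorem cw_le_rowsum (hm : 2 ≤ m) (hn : 0 < n) {M : Fin n → (Fin (m-1) → Fin n) → ℝ}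
    (hM : ∀ i f, 0 ≤ M i f) {x : Fin n → ℝ} {t : ℝ}
    (hx : ∀ i, 0 ≤ x i) (hs : ∑ i, x i = 1) (h : ∀ i, t * x i ^ (m-1) ≤ rApp M x i) :
    ∃ i, t ≤ ∑ f : Fin (m-1) → Fin n, M i f := by
  obtain ⟨i0, -, hi0⟩ := Finset.exists_max_image Finset.univ x ⟨⟨0, hn⟩, Finset.mem_univ _⟩
  have hxpos : 0 < x i0 := by
    by_contra hc
    push_neg at hc
    have hx0 : ∀ i, x i = 0 := fun i => le_antisymm
      (le_trans (hi0 i (Finset.mem_univ i)) hc) (hx i)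
    rw [Finset.sum_eq_zero (fun i _ => hx0 i)] at hs
    norm_num at hs
  refine ⟨i0, ?_⟩
  have hb : rApp M x i0 ≤ (∑ f : Fin (m-1) → Fin n, M i0 f) * x i0 ^ (m-1) := by
    rw [Finset.sum_mul]
    exact Finset.sum_le_sum fun f _ => mul_le_mul_of_nonneg_left
      (prod_le_pow_max hx (fun i => hi0 i (Finset.mem_univ i)) f) (hM i0 f)
  have := le_trans (h i0) hb
  have hp : 0 < x i0 ^ (m-1) := pow_pos hxpos _
  exact le_of_mul_le_mul_right this hp

/-- Perron-Frobenius for strictly positive tensors, with Collatz-Wielandt maximality -/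
theorem posPF (hm : 2 ≤ m) (hn : 0 < n) {P : Fin n → (Fin (m-1) → Fin n) → ℝ}
    (hP : ∀ i f, 0 < P i f) :
    ∃ (x : Fin n → ℝ) (lam : ℝ), (∀ i, 0 < x i) ∧ (∑ i, x i = 1) ∧ 0 ≤ lam ∧
      (∀ i, rApp P x i = lam * x i ^ (m-1)) ∧ ∀ μ u, CWpair P μ u → μ ≤ lam := by
  have hP' : ∀ i f, 0 ≤ P i f := fun i f => le_of_lt (hP i f)
  set K : Set ((Fin n → ℝ) × ℝ) :=
    {p | (∀ i, 0 ≤ p.1 i) ∧ (∑ i, p.1 i = 1) ∧ 0 ≤ p.2 ∧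
      ∀ i, p.2 * p.1 i ^ (m-1) ≤ rApp P p.1 i} with hKdef
  -- compactness
  have hB0 : ∃ B0 : ℝ, ∀ p ∈ K, p.2 ≤ B0 := by
    refine ⟨Finset.univ.sup' (Finset.univ_nonempty_iff.2 ⟨⟨0,hn⟩⟩)
      (fun i => ∑ f : Fin (m-1) → Fin n, P i f), fun p hp => ?_⟩
    obtain ⟨h1, h2, h3, h4⟩ := hp
    obtain ⟨i, hi⟩ := cw_le_rowsum hm hn hP' h1 h2 h4
    exact le_trans hi (Finset.le_sup' (fun i => ∑ f : Fin (m-1) → Fin n, P i f) (Finset.mem_univ i))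
  obtain ⟨B0, hB0⟩ := hB0
  have hKclosed : IsClosed K := by
    have : K = (⋂ i, {p : (Fin n → ℝ) × ℝ | 0 ≤ p.1 i}) ∩
        ({p : (Fin n → ℝ) × ℝ | ∑ i, p.1 i = 1} ∩
          ({p : (Fin n → ℝ) × ℝ | 0 ≤ p.2} ∩
            ⋂ i, {p : (Fin n → ℝ) × ℝ | p.2 * p.1 i ^ (m-1) ≤ rApp P p.1 i})) := by
      ext p
      simp only [hKdef, Set.mem_setOf_eq, Set.mem_inter_iff, Set.mem_iInter]
    rw [this]
    refine IsClosed.inter (isClosed_iInter fun i => isClosed_le continuous_const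
        ((continuous_apply i).comp continuous_fst)) ?_
    refine IsClosed.inter (isClosed_eq (by fun_prop) continuous_const) ?_
    refine IsClosed.inter (isClosed_le continuous_const continuous_snd) ?_
    refine isClosed_iInter fun i => isClosed_le (by fun_prop) ?_
    exact (continuous_rApp P i).comp continuous_fst
  have hKcomp : IsCompact K := by
    have hT : IsCompact ((Set.univ.pi fun _ : Fin n => Set.Icc (0:ℝ) 1) ×ˢ Set.Icc 0 B0) :=
      (isCompact_univ_pi fun i => isCompact_Icc).prod isCompact_Icc
    refine hT.of_isClosed_subset hKclosed ?_
    rintro p ⟨h1, h2, h3, h4⟩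
    refine ⟨fun i _ => ⟨h1 i, ?_⟩, h3, hB0 p ⟨h1, h2, h3, h4⟩⟩
    calc p.1 i ≤ ∑ j, p.1 j := Finset.single_le_sum (fun j _ => h1 j) (Finset.mem_univ i)
      _ = 1 := h2
  have hKne : K.Nonempty := by
    refine ⟨(fun _ => (n:ℝ)⁻¹, 0), fun i => by positivity, ?_, le_refl 0, fun i => ?_⟩
    · rw [Finset.sum_const, Finset.card_univ, Fintype.card_fin, nsmul_eq_mul]
      field_simp
    · rw [zero_mul]
      exact rApp_nonneg hP' (fun i => by positivity) i
  obtain ⟨q, hqK, hqmax⟩ := hKcomp.exists_isMaxOn hKne continuous_snd.continuousOn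
  obtain ⟨hx0, hxsum, hs0, hsK⟩ := hqK
  set x : Fin n → ℝ := q.1 with hxdef
  set s : ℝ := q.2 with hsdef
  -- the eigen equation holds at the maximizer
  have heq : ∀ i, rApp P x i = s * x i ^ (m-1) := by
    by_contra hcon
    push_neg at hcon
    obtain ⟨i0, hi0⟩ := hcon
    have hlt : s * x i0 ^ (m-1) < rApp P x i0 := lt_of_le_of_ne (hsK i0) (Ne.symm hi0)
    set κ : ℝ := rApp P x i0 - s * x i0 ^ (m-1) with hκdef
    have hκ : 0 < κ := by simp [hκdef]; linarith
    -- choose t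
    have hcont : Filter.Tendsto (fun t : ℝ => s * (x i0 + t) ^ (m-1)) (nhds 0)
        (nhds (s * (x i0 + 0) ^ (m-1))) :=
      (by fun_prop : Continuous fun t : ℝ => s * (x i0 + t) ^ (m-1)).tendsto 0
    rw [add_zero] at hcont
    have hev : ∀ᶠ t : ℝ in nhds 0, s * (x i0 + t) ^ (m-1) < s * x i0 ^ (m-1) + κ/2 :=
      hcont.eventually_lt_const (by linarith)
    have hev2 : ∀ᶠ t : ℝ in nhdsWithin 0 (Set.Ioi 0),
        s * (x i0 + t) ^ (m-1) < s * x i0 ^ (m-1) + κ/2 ∧ t ∈ Set.Ioo (0:ℝ) 1 := by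
      exact Filter.Eventually.and (hev.filter_mono nhdsWithin_le_nhds)
        (Filter.eventually_of_mem (Ioo_mem_nhdsGT_of_mem ⟨le_refl 0, zero_lt_one⟩) fun t ht => ht)
    obtain ⟨t, hts, ht0, ht1⟩ := hev2.exists
    set f0 : Fin (m-1) → Fin n := fun _ => i0 with hf0
    set w : Fin n → ℝ := Function.update x i0 (x i0 + t) with hwdef
    have hwx : ∀ j, x j ≤ w j := by
      intro j
      rcases eq_or_ne j i0 with rfl | hne
      · rw [hwdef, Function.update_self]; linarith
      · rw [hwdef, Function.update_of_ne hne]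
    have hw0 : ∀ j, 0 ≤ w j := fun j => le_trans (hx0 j) (hwx j)
    have hwi0 : w i0 = x i0 + t := Function.update_self _ _ _
    have hgrow : ∀ j, rApp P x j + P j f0 * t ^ (m-1) ≤ rApp P w j := by
      intro j
      have hsum : rApp P x j + P j f0 * t ^ (m-1)
          = ∑ f : Fin (m-1) → Fin n,
            (P j f * ∏ k, x (f k) + if f = f0 then P j f0 * t ^ (m-1) else 0) := by
        rw [Finset.sum_add_distrib, Finset.sum_ite_eq' Finset.univ f0
          (fun _ => P j f0 * t ^ (m-1))]
        simp [rApp]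
      rw [hsum]
      refine Finset.sum_le_sum fun f _ => ?_
      by_cases hf : f = f0
      · rw [if_pos hf, hf]
        have hprodx : ∏ k, x (f0 k) = x i0 ^ (m-1) := by
          simp only [hf0, Finset.prod_const, Finset.card_univ, Fintype.card_fin]
        have hprodw : ∏ k, w (f0 k) = (x i0 + t) ^ (m-1) := by
          simp only [hf0, hwi0, Finset.prod_const, Finset.card_univ, Fintype.card_fin]
        rw [hprodx, hprodw, ← mul_add]
        exact mul_le_mul_of_nonneg_left
          (pow_add_pow_le (hx0 i0) (le_of_lt ht0) (by omega)) (hP' j f0)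
      · rw [if_neg hf, add_zero]
        exact mul_le_mul_of_nonneg_left
          (Finset.prod_le_prod (fun k _ => hx0 _) (fun k _ => hwx _)) (hP' j f)
    have hxi0t : (0:ℝ) < (x i0 + t) ^ (m-1) := pow_pos (by linarith [hx0 i0]) _
    set c : Fin n → ℝ := fun j => if j = i0 then (κ/2) / (x i0 + t) ^ (m-1)
      else if x j = 0 then 1 else P j f0 * t ^ (m-1) / x j ^ (m-1) with hcdef
    have hcpos : ∀ j, 0 < c j := by
      intro j
      show (0:ℝ) < if j = i0 then (κ/2) / (x i0 + t) ^ (m-1)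
        else if x j = 0 then 1 else P j f0 * t ^ (m-1) / x j ^ (m-1)
      by_cases hne : j = i0
      · rw [if_pos hne]; positivity
      · rw [if_neg hne]
        rcases eq_or_ne (x j) 0 with h0 | h0
        · rw [if_pos h0]; norm_num
        · rw [if_neg h0]
          have hxj : 0 < x j := lt_of_le_of_ne (hx0 j) (Ne.symm h0)
          have hPj := hP j f0
          positivity
    set δ : ℝ := Finset.univ.inf' (Finset.univ_nonempty_iff.2 ⟨⟨0,hn⟩⟩) c with hδdef
    have hδpos : 0 < δ := by
      rw [hδdef, Finset.lt_inf'_iff]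
      exact fun j _ => hcpos j
    have hδle : ∀ j, δ ≤ c j := fun j => Finset.inf'_le c (Finset.mem_univ j)
    have hkey : ∀ j, (s + δ) * w j ^ (m-1) ≤ rApp P w j := by
      intro j
      by_cases hne : j = i0
      · rw [hne, hwi0]
        have h1 : δ * (x i0 + t) ^ (m-1) ≤ κ/2 := by
          have hd : δ ≤ (κ/2) / (x i0 + t) ^ (m-1) := by
            have hd0 := hδle i0
            simpa [hcdef] using hd0
          calc δ * (x i0 + t) ^ (m-1)
              ≤ (κ/2) / (x i0 + t) ^ (m-1) * (x i0 + t) ^ (m-1) :=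
                mul_le_mul_of_nonneg_right hd (le_of_lt hxi0t)
            _ = κ/2 := div_mul_cancel₀ _ (ne_of_gt hxi0t)
        have h2 : rApp P x i0 ≤ rApp P w i0 := rApp_mono_x hP' hx0 hwx i0
        have h3 : s * x i0 ^ (m-1) + κ = rApp P x i0 := by rw [hκdef]; ring
        have h4 : (s + δ) * (x i0 + t) ^ (m-1)
            = s * (x i0 + t) ^ (m-1) + δ * (x i0 + t) ^ (m-1) := by ring
        linarith
      · rcases eq_or_ne (x j) 0 with h0 | h0
        · have hwj : w j = 0 := by rw [hwdef, Function.update_of_ne hne, h0]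
          rw [hwj, zero_pow (by omega : m - 1 ≠ 0), mul_zero]
          exact rApp_nonneg hP' hw0 j
        · have hxj : 0 < x j := lt_of_le_of_ne (hx0 j) (Ne.symm h0)
          have hwj : w j = x j := by rw [hwdef, Function.update_of_ne hne]
          have h1 : δ * x j ^ (m-1) ≤ P j f0 * t ^ (m-1) := by
            have hd := hδle j
            simp only [hcdef] at hd
            rw [if_neg hne, if_neg h0] at hd
            calc δ * x j ^ (m-1)
                ≤ P j f0 * t ^ (m-1) / x j ^ (m-1) * x j ^ (m-1) :=
                  mul_le_mul_of_nonneg_right hd (le_of_lt (pow_pos hxj _))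
              _ = P j f0 * t ^ (m-1) := div_mul_cancel₀ _ (ne_of_gt (pow_pos hxj _))
          have h2 := hgrow j
          have h3 := hsK j
          rw [hwj, add_mul]
          linarith
    have hsumw : ∑ j, w j = 1 + t := by
      rw [hwdef, Finset.sum_update_of_mem (Finset.mem_univ i0), Finset.sdiff_singleton_eq_erase]
      have he : x i0 + ∑ j ∈ Finset.univ.erase i0, x j = 1 := by
        rw [Finset.add_sum_erase _ x (Finset.mem_univ i0)]
        exact hxsum
      linarith
    have ht1' : (0:ℝ) < 1 + t := by linarith
    have hq'K : ((fun j => (1+t)⁻¹ * w j, s + δ) : (Fin n → ℝ) × ℝ) ∈ K := by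
      refine ⟨fun j => by have := hw0 j; positivity, ?_, by positivity, fun i => ?_⟩
      · rw [← Finset.mul_sum, hsumw, inv_mul_cancel₀ (ne_of_gt ht1')]
      · have e1 : (s + δ) * ((1+t)⁻¹ * w i) ^ (m-1)
            = (1+t)⁻¹ ^ (m-1) * ((s + δ) * w i ^ (m-1)) := by rw [mul_pow]; ring
        show (s + δ) * ((1+t)⁻¹ * w i) ^ (m-1) ≤ rApp P (fun j => (1+t)⁻¹ * w j) i
        rw [e1, rApp_smul]
        exact mul_le_mul_of_nonneg_left (hkey i) (by positivity)
    have hcontra : s + δ ≤ s := hqmax hq'K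
    linarith
  have hxpos : ∀ i, 0 < x i := by
    intro i
    rcases lt_or_eq_of_le (hx0 i) with h | h
    · exact h
    · exfalso
      have hex : ∃ j, 0 < x j := by
        by_contra hc
        push_neg at hc
        have hz : ∀ j, x j = 0 := fun j => le_antisymm (hc j) (hx0 j)
        rw [Finset.sum_eq_zero fun j _ => hz j] at hxsum
        norm_num at hxsum
      obtain ⟨j, hj⟩ := hex
      have hprodj : ∏ k, x ((fun _ : Fin (m-1) => j) k) = x j ^ (m-1) := by
        simp only [Finset.prod_const, Finset.card_univ, Fintype.card_fin]
      have hterm : 0 < P i (fun _ : Fin (m-1) => j) * ∏ k, x ((fun _ : Fin (m-1) => j) k) := by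
        rw [hprodj]
        exact mul_pos (hP i _) (pow_pos hj _)
      have hpos : 0 < rApp P x i :=
        lt_of_lt_of_le hterm (term_le_rApp hP' hx0 i (fun _ : Fin (m-1) => j))
      rw [heq i, ← h, zero_pow (by omega : m - 1 ≠ 0), mul_zero] at hpos
      exact lt_irrefl 0 hpos
  refine ⟨x, s, hxpos, hxsum, hs0, heq, ?_⟩
  rintro μ u ⟨hμ0, hu0, ⟨i1, hi1⟩, hcw⟩
  have hsum : 0 < ∑ i, u i := Finset.sum_pos' (fun i _ => hu0 i) ⟨i1, Finset.mem_univ _, hi1⟩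
  have hqK : ((fun j => (∑ i, u i)⁻¹ * u j, μ) : (Fin n → ℝ) × ℝ) ∈ K := by
    refine ⟨fun j => by have := hu0 j; positivity, ?_, hμ0, fun i => ?_⟩
    · rw [← Finset.mul_sum, inv_mul_cancel₀ (ne_of_gt hsum)]
    · have e1 : μ * ((∑ i, u i)⁻¹ * u i) ^ (m-1)
          = (∑ i, u i)⁻¹ ^ (m-1) * (μ * u i ^ (m-1)) := by rw [mul_pow]; ring
      show μ * ((∑ i, u i)⁻¹ * u i) ^ (m-1) ≤ rApp P (fun j => (∑ i, u i)⁻¹ * u j) i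
      rw [e1, rApp_smul]
      exact mul_le_mul_of_nonneg_left (hcw i) (by positivity)
  exact hqmax hqK

/-- chain bound along a path in the graph of `M` -/
theorem chain_bound (hm : 2 ≤ m) (hn : 0 < n)
    {M : Fin n → (Fin (m-1) → Fin n) → ℝ} (hM : ∀ i f, 0 ≤ M i f)
    {amin R : ℝ} (hamin : 0 < amin)
    (haminle : ∀ i f, M i f ≠ 0 → amin ≤ M i f) (hR : 0 < R)
    {j i0 : Fin n}
    (hpath : Relation.ReflTransGen (fun a b => ∃ f, M a f ≠ 0 ∧ ∃ k, f k = b) j i0) :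
    ∃ (e : ℕ) (D : ℝ), 0 < D ∧ ∀ (z : Fin n → ℝ) (lam : ℝ),
      (∀ i, 0 < z i) → 0 < lam → lam ≤ R →
      (∀ i, rApp M z i ≤ lam * z i ^ (m-1)) → ((n:ℝ)⁻¹ ≤ z i0) →
      ∀ μ, 0 < μ → (∀ i, μ ≤ z i) →
      D * μ ^ ((m-1)^e) ≤ z j ^ ((m-1)^e) * μ := by
  induction hpath using Relation.ReflTransGen.head_induction_on with
  | refl =>
    refine ⟨0, (n:ℝ)⁻¹, inv_pos.2 (by exact_mod_cast hn : (0:ℝ) < n),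
      fun z lam hz hlam hlamR hcw hzi0 μ hμ hμle => ?_⟩
    simp only [pow_zero, pow_one]
    exact mul_le_mul_of_nonneg_right hzi0 (le_of_lt hμ)
  | head harc hpath ih =>
    rename_i a b
    obtain ⟨f, hf, k, hk⟩ := harc
    obtain ⟨e, D, hD, hbound⟩ := ih
    have hc : (0:ℝ) < amin / R := div_pos hamin hR
    refine ⟨e + 1, (amin/R) ^ ((m-1)^e) * D, mul_pos (pow_pos hc _) hD,
      fun z lam hz hlam hlamR hcw hzi0 μ hμ hμle => ?_⟩
    set q : ℕ := (m-1)^e with hq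
    -- single-step inequality
    have hstep : amin / R * (z b * μ ^ (m-2)) ≤ z a ^ (m-1) := by
      have h1 : amin * (z b * μ ^ (m-2)) ≤ M a f * ∏ l, z (f l) := by
        have h2 : z b * μ ^ (m-2) ≤ ∏ l, z (f l) := by
          rw [← hk]
          exact single_mul_min_le_prod hm (le_of_lt hμ) hμle f k
        calc amin * (z b * μ ^ (m-2)) ≤ amin * ∏ l, z (f l) :=
              mul_le_mul_of_nonneg_left h2 (le_of_lt hamin)
          _ ≤ M a f * ∏ l, z (f l) := mul_le_mul_of_nonneg_right (haminle a f hf)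
              (Finset.prod_nonneg fun l _ => le_of_lt (hz (f l)))
      have h3 : M a f * ∏ l, z (f l) ≤ lam * z a ^ (m-1) :=
        le_trans (term_le_rApp hM (fun i => le_of_lt (hz i)) a f) (hcw a)
      have h4 : amin * (z b * μ ^ (m-2)) ≤ lam * z a ^ (m-1) := le_trans h1 h3
      rw [div_mul_eq_mul_div, div_le_iff₀ hR]
      calc amin * (z b * μ ^ (m-2)) ≤ lam * z a ^ (m-1) := h4
        _ ≤ R * z a ^ (m-1) := mul_le_mul_of_nonneg_right hlamR (pow_nonneg (le_of_lt (hz a)) _)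
        _ = z a ^ (m-1) * R := mul_comm _ _
    -- raise to the q-th power
    have hstepq : (amin/R) ^ q * (z b ^ q * (μ ^ (m-2)) ^ q) ≤ (z a ^ (m-1)) ^ q := by
      have := pow_le_pow_left₀ (mul_nonneg (le_of_lt hc)
        (mul_nonneg (le_of_lt (hz b)) (pow_nonneg (le_of_lt hμ) _))) hstep q
      calc (amin/R) ^ q * (z b ^ q * (μ ^ (m-2)) ^ q)
          = (amin / R * (z b * μ ^ (m-2))) ^ q := by rw [mul_pow, mul_pow]
        _ ≤ (z a ^ (m-1)) ^ q := this
    have hIH := hbound z lam hz hlam hlamR hcw hzi0 μ hμ hμle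
    -- combine
    have hgoal : (amin/R) ^ q * D * μ ^ ((m-1)^(e+1)) ≤ z a ^ ((m-1)^(e+1)) * μ := by
      have hexp : (m-1)^(e+1) = (m-2)*q + q := by
        rw [hq, pow_succ]
        have : m - 1 = (m-2) + 1 := by omega
        rw [this]
        ring
      have e1 : μ ^ ((m-1)^(e+1)) = (μ ^ (m-2)) ^ q * μ ^ q := by
        rw [hexp, pow_add, pow_mul]
      have e2 : z a ^ ((m-1)^(e+1)) = (z a ^ (m-1)) ^ q := by
        have hss : (m-1)^(e+1) = (m-1) * q := by rw [hq, pow_succ]; ring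
        rw [hss, pow_mul]
      rw [e1, e2]
      calc (amin/R) ^ q * D * ((μ ^ (m-2)) ^ q * μ ^ q)
          = (amin/R) ^ q * (μ ^ (m-2)) ^ q * (D * μ ^ q) := by ring
        _ ≤ (amin/R) ^ q * (μ ^ (m-2)) ^ q * (z b ^ q * μ) := by
            refine mul_le_mul_of_nonneg_left hIH (by positivity)
        _ = (amin/R) ^ q * (z b ^ q * (μ ^ (m-2)) ^ q) * μ := by ring
        _ ≤ (z a ^ (m-1)) ^ q * μ := mul_le_mul_of_nonneg_right hstepq (le_of_lt hμ)
    exact hgoal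

/-- uniform positivity of sub-eigenvectors under weak irreducibility -/
theorem uniform_pos (hm : 2 ≤ m) (hn : 0 < n)
    {M : Fin n → (Fin (m-1) → Fin n) → ℝ} (hM : ∀ i f, 0 ≤ M i f)
    (hwi : ∀ i j : Fin n, Relation.ReflTransGen (fun a b => ∃ f, M a f ≠ 0 ∧ ∃ k, f k = b) i j)
    (hex : ∃ i f, M i f ≠ 0) {R : ℝ} (hR : 0 < R) :
    ∃ δ : ℝ, 0 < δ ∧ ∀ (z : Fin n → ℝ) (lam : ℝ),
      (∀ i, 0 < z i) → (∑ i, z i = 1) → 0 < lam → lam ≤ R →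
      (∀ i, rApp M z i ≤ lam * z i ^ (m-1)) → ∀ i, δ ≤ z i := by
  classical
  obtain ⟨i1, f1, hif1⟩ := hex
  set S : Finset (Fin n × ((Fin (m-1)) → Fin n)) :=
    Finset.univ.filter (fun p => M p.1 p.2 ≠ 0) with hSdef
  have hmemS : ∀ i f, M i f ≠ 0 → (i, f) ∈ S := fun i f h => by
    rw [hSdef]; exact Finset.mem_filter.2 ⟨Finset.mem_univ _, h⟩
  have hSne : S.Nonempty := ⟨(i1, f1), hmemS i1 f1 hif1⟩
  set amin : ℝ := S.inf' hSne (fun p => M p.1 p.2) with hamindef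
  have hamin : 0 < amin := by
    rw [hamindef, Finset.lt_inf'_iff]
    rintro ⟨i, f⟩ hp
    rw [hSdef, Finset.mem_filter] at hp
    exact lt_of_le_of_ne (hM i f) (Ne.symm hp.2)
  have haminle : ∀ i f, M i f ≠ 0 → amin ≤ M i f := by
    intro i f h
    rw [hamindef]
    exact Finset.inf'_le _ (hmemS i f h)
  have hch : ∀ p : Fin n × Fin n, ∃ (e : ℕ) (D : ℝ), 0 < D ∧ ∀ (z : Fin n → ℝ) (lam : ℝ),
      (∀ i, 0 < z i) → 0 < lam → lam ≤ R →
      (∀ i, rApp M z i ≤ lam * z i ^ (m-1)) → ((n:ℝ)⁻¹ ≤ z p.2) →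
      ∀ μ, 0 < μ → (∀ i, μ ≤ z i) →
      D * μ ^ ((m-1)^e) ≤ z p.1 ^ ((m-1)^e) * μ :=
    fun p => chain_bound hm hn hM hamin haminle hR (hwi p.1 p.2)
  choose e D hD hbound using hch
  have huniv : (Finset.univ : Finset (Fin n × Fin n)).Nonempty :=
    ⟨(⟨0,hn⟩, ⟨0,hn⟩), Finset.mem_univ _⟩
  refine ⟨Finset.univ.inf' huniv D, by rw [Finset.lt_inf'_iff]; exact fun p _ => hD p, ?_⟩
  intro z lam hz hzsum hlam hlamR hcw i
  obtain ⟨i0, -, hi0⟩ := Finset.exists_max_image Finset.univ z ⟨⟨0, hn⟩, Finset.mem_univ _⟩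
  obtain ⟨jm, -, hjm⟩ := Finset.exists_min_image Finset.univ z ⟨⟨0, hn⟩, Finset.mem_univ _⟩
  have hzi0 : (n:ℝ)⁻¹ ≤ z i0 := by
    have h1 : (1:ℝ) ≤ n * z i0 := by
      calc (1:ℝ) = ∑ j, z j := hzsum.symm
        _ ≤ ∑ _j : Fin n, z i0 := Finset.sum_le_sum fun j _ => hi0 j (Finset.mem_univ j)
        _ = n * z i0 := by rw [Finset.sum_const, Finset.card_univ, Fintype.card_fin,
            nsmul_eq_mul]
    rw [inv_le_iff_one_le_mul₀ (by exact_mod_cast hn : (0:ℝ) < n)]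
    linarith [h1]
  set μ : ℝ := z jm with hμdef
  have hμ : 0 < μ := hz jm
  have hμle : ∀ i, μ ≤ z i := fun i => hjm i (Finset.mem_univ i)
  have hb := hbound (jm, i0) z lam hz hlam hlamR hcw hzi0 μ hμ hμle
  have hDle : D (jm, i0) ≤ μ := by
    have hq : (0:ℝ) < μ ^ ((m-1)^(e (jm, i0))) := pow_pos hμ _
    have : D (jm, i0) * μ ^ ((m-1)^(e (jm, i0))) ≤ μ ^ ((m-1)^(e (jm, i0))) * μ := hb
    nlinarith [this]
  calc Finset.univ.inf' huniv D ≤ D (jm, i0) := Finset.inf'_le _ (Finset.mem_univ _)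
    _ ≤ μ := hDle
    _ ≤ z i := hμle i

/-- main Perron-Frobenius construction for nonnegative tensors -/
theorem mainPF (hm : 2 ≤ m) (hn : 0 < n)
    {M : Fin n → (Fin (m-1) → Fin n) → ℝ} (hM : ∀ i f, 0 ≤ M i f) :
    ∃ (x : Fin n → ℝ) (lam : ℝ), (∀ i, 0 ≤ x i) ∧ (∑ i, x i = 1) ∧ 0 ≤ lam ∧
      (∀ i, rApp M x i = lam * x i ^ (m-1)) ∧
      (∀ μ u, CWpair M μ u → μ ≤ lam) ∧
      ((∀ i j : Fin n, Relation.ReflTransGen (fun a b => ∃ f, M a f ≠ 0 ∧ ∃ k, f k = b) i j) →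
        ∀ i, 0 < x i) := by
  classical
  set ε : ℕ → ℝ := fun k => 1/((k:ℝ)+1) with hεdef
  have hε : ∀ k, 0 < ε k := fun k => by rw [hεdef]; positivity
  have hε1 : ∀ k, ε k ≤ 1 := fun k => by
    rw [hεdef]
    rw [div_le_one (by positivity)]
    simp
  set P : ℕ → Fin n → (Fin (m-1) → Fin n) → ℝ := fun k i f => M i f + ε k with hPdef
  have hPpos : ∀ k i f, 0 < P k i f := fun k i f => add_pos_of_nonneg_of_pos (hM i f) (hε k)
  have hPF : ∀ k, ∃ (x : Fin n → ℝ) (lam : ℝ), (∀ i, 0 < x i) ∧ (∑ i, x i = 1) ∧ 0 ≤ lam ∧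
      (∀ i, rApp (P k) x i = lam * x i ^ (m-1)) ∧ ∀ μ u, CWpair (P k) μ u → μ ≤ lam :=
    fun k => posPF hm hn (hPpos k)
  choose xs lams hxpos hxsum hlam0 heig hcwmax using hPF
  -- uniform upper bound for lams
  set B0 : ℝ := Finset.univ.sup' (Finset.univ_nonempty_iff.2 ⟨⟨0,hn⟩⟩)
    (fun i => ∑ f : Fin (m-1) → Fin n, (M i f + 1)) with hB0def
  have hlamB : ∀ k, lams k ≤ B0 := by
    intro k
    obtain ⟨i, hi⟩ := cw_le_rowsum hm hn (fun i f => le_of_lt (hPpos k i f))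
      (fun i => le_of_lt (hxpos k i)) (hxsum k) (fun i => le_of_eq (heig k i).symm)
    calc lams k ≤ ∑ f : Fin (m-1) → Fin n, P k i f := hi
      _ ≤ ∑ f : Fin (m-1) → Fin n, (M i f + 1) :=
          Finset.sum_le_sum fun f _ => by
            rw [hPdef]
            exact add_le_add le_rfl (hε1 k)
      _ ≤ B0 := Finset.le_sup' (fun i => ∑ f : Fin (m-1) → Fin n, (M i f + 1))
          (Finset.mem_univ i)
  -- lower bound for lams
  have hlamε : ∀ k, ε k ≤ lams k := by
    intro k
    refine hcwmax k (ε k) (fun _ => 1) ⟨le_of_lt (hε k), fun i => zero_le_one, ⟨⟨0,hn⟩, zero_lt_one⟩, fun i => ?_⟩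
    have hterm : P k i (fun _ => ⟨0,hn⟩) * ∏ j, (1:ℝ) ≤ rApp (P k) (fun _ => 1) i :=
      term_le_rApp (fun i f => le_of_lt (hPpos k i f)) (fun _ => zero_le_one) i _
    rw [Finset.prod_const_one, mul_one] at hterm
    rw [one_pow, mul_one]
    calc ε k ≤ P k i (fun _ => ⟨0,hn⟩) := by
          rw [hPdef]
          simpa using hM i _
      _ ≤ rApp (P k) (fun _ => 1) i := hterm
  -- compactness and limit extraction
  set T : Set ((Fin n → ℝ) × ℝ) :=
    (Set.univ.pi fun _ : Fin n => Set.Icc (0:ℝ) 1) ×ˢ Set.Icc 0 B0 with hTdef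
  have hT : IsCompact T := (isCompact_univ_pi fun i => isCompact_Icc).prod isCompact_Icc
  have hseqT : ∀ k, ((xs k, lams k) : (Fin n → ℝ) × ℝ) ∈ T := by
    intro k
    refine ⟨fun i _ => ⟨le_of_lt (hxpos k i), ?_⟩, hlam0 k, hlamB k⟩
    calc xs k i ≤ ∑ j, xs k j :=
        Finset.single_le_sum (fun j _ => le_of_lt (hxpos k j)) (Finset.mem_univ i)
      _ = 1 := hxsum k
  obtain ⟨a, haT, φ, hφ, htend⟩ := hT.tendsto_subseq hseqT
  set x : Fin n → ℝ := a.1 with hxdef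
  set lam : ℝ := a.2 with hlamdef
  have hxt : Filter.Tendsto (fun k => xs (φ k)) Filter.atTop (nhds x) :=
    (continuous_fst.tendsto a).comp htend
  have hlamt : Filter.Tendsto (fun k => lams (φ k)) Filter.atTop (nhds lam) :=
    (continuous_snd.tendsto a).comp htend
  have hxit : ∀ i, Filter.Tendsto (fun k => xs (φ k) i) Filter.atTop (nhds (x i)) :=
    fun i => ((continuous_apply i).tendsto x).comp hxt
  have hεt : Filter.Tendsto (fun k => ε (φ k)) Filter.atTop (nhds 0) :=
    tendsto_one_div_add_atTop_nhds_zero_nat.comp hφ.tendsto_atTop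
  have hx0 : ∀ i, 0 ≤ x i := fun i =>
    ge_of_tendsto (hxit i) (Filter.Eventually.of_forall fun k => le_of_lt (hxpos (φ k) i))
  have hxsum1 : ∑ i, x i = 1 := by
    have hst : Filter.Tendsto (fun k => ∑ i, xs (φ k) i) Filter.atTop (nhds (∑ i, x i)) :=
      ((continuous_finset_sum Finset.univ fun i _ =>
        (continuous_apply i : Continuous fun y : Fin n → ℝ => y i)).tendsto x).comp hxt
    have hst1 : Filter.Tendsto (fun k => ∑ i, xs (φ k) i) Filter.atTop (nhds 1) := by
      simp only [hxsum]
      exact tendsto_const_nhds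
    exact tendsto_nhds_unique hst hst1
  have hlam0' : 0 ≤ lam :=
    ge_of_tendsto hlamt (Filter.Eventually.of_forall fun k => hlam0 (φ k))
  -- pass the eigen equation to the limit
  have heig' : ∀ i, rApp M x i = lam * x i ^ (m-1) := by
    intro i
    have hcg : Continuous fun y : Fin n → ℝ => ∑ f : Fin (m-1) → Fin n, ∏ j, y (f j) :=
      continuous_finset_sum _ fun f _ => continuous_finset_prod _ fun j _ => continuous_apply (f j)
    have t1 : Filter.Tendsto (fun k => rApp (P (φ k)) (xs (φ k)) i) Filter.atTop
        (nhds (rApp M x i + 0 * ∑ f : Fin (m-1) → Fin n, ∏ j, x (f j))) := by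
      have e1 : ∀ k, rApp (P (φ k)) (xs (φ k)) i
          = rApp M (xs (φ k)) i + ε (φ k) * ∑ f : Fin (m-1) → Fin n, ∏ j, xs (φ k) (f j) := by
        intro k
        rw [hPdef]
        exact rApp_add_const M (ε (φ k)) (xs (φ k)) i
      simp only [e1]
      exact Filter.Tendsto.add (((continuous_rApp M i).tendsto x).comp hxt)
        (Filter.Tendsto.mul hεt ((hcg.tendsto x).comp hxt))
    have t2 : Filter.Tendsto (fun k => lams (φ k) * xs (φ k) i ^ (m-1)) Filter.atTop
        (nhds (lam * x i ^ (m-1))) :=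
      Filter.Tendsto.mul hlamt (Filter.Tendsto.pow (hxit i) _)
    have teq : (fun k => rApp (P (φ k)) (xs (φ k)) i)
        = fun k => lams (φ k) * xs (φ k) i ^ (m-1) := funext fun k => heig (φ k) i
    rw [teq] at t1
    have := tendsto_nhds_unique t1 t2
    rw [zero_mul, add_zero] at this
    exact this
  -- Collatz-Wielandt maximality in the limit
  have hcw' : ∀ μ u, CWpair M μ u → μ ≤ lam := by
    rintro μ u ⟨hμ0, hu0, hupos, hucw⟩
    refine ge_of_tendsto hlamt (Filter.Eventually.of_forall fun k => ?_)
    refine hcwmax (φ k) μ u ⟨hμ0, hu0, hupos, fun i => ?_⟩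
    calc μ * u i ^ (m-1) ≤ rApp M u i := hucw i
      _ ≤ rApp (P (φ k)) u i := rApp_mono_M (fun i f => by
          rw [hPdef]
          simpa using le_of_lt (hε (φ k))) hu0 i
  refine ⟨x, lam, hx0, hxsum1, hlam0', heig', hcw', ?_⟩
  -- positivity under weak irreducibility
  intro hwi
  by_cases hex : ∃ i f, M i f ≠ 0
  · have hB0pos : 0 < B0 + 1 := by
      have : (0:ℝ) ≤ B0 := le_trans (hlam0 0) (hlamB 0)
      linarith
    obtain ⟨δ, hδ, hδb⟩ := uniform_pos hm hn hM hwi hex hB0pos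
    intro i
    have hbd : ∀ k, δ ≤ xs (φ k) i := by
      intro k
      refine hδb (xs (φ k)) (lams (φ k)) (hxpos (φ k)) (hxsum (φ k))
        (lt_of_lt_of_le (hε (φ k)) (hlamε (φ k))) (by linarith [hlamB (φ k)]) (fun j => ?_) i
      rw [← heig (φ k) j]
      exact rApp_mono_M (fun i f => by rw [hPdef]; simpa using le_of_lt (hε (φ k)))
        (fun j => le_of_lt (hxpos (φ k) j)) j
    exact lt_of_lt_of_le hδ (ge_of_tendsto (hxit i) (Filter.Eventually.of_forall hbd))
  · -- M = 0 : weak irreducibility forces n = 1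
    push_neg at hex
    by_cases hn2 : 2 ≤ n
    · exfalso
      have h01 : (⟨0, by omega⟩ : Fin n) ≠ (⟨1, by omega⟩ : Fin n) := by
        intro h
        have := congrArg Fin.val h
        simp at this
      rcases Relation.ReflTransGen.cases_head (hwi ⟨0, by omega⟩ ⟨1, by omega⟩) with h | ⟨c, ⟨f, hf, _⟩, -⟩
      · exact h01 h
      · exact hf (hex _ f)
    · intro i
      have hn1 : n = 1 := by omega
      have hall : ∀ j : Fin n, j = i := fun j => Fin.ext (by omega)
      have : ∑ j, x j = x i := by
        rw [Finset.sum_congr rfl (fun j _ => congrArg x (hall j)), Finset.sum_const,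
          Finset.card_univ, Fintype.card_fin, hn1, one_smul]
      rw [hxsum1] at this
      rw [← this]
      exact zero_lt_one

end PFAux

section YangYangAux
open PFAux

variable {n m : ℕ}

theorem tApp_coe (MA : Fin n → (Fin (m-1) → Fin n) → ℝ) (x : Fin n → ℝ) (i : Fin n) :
    tApp (fun i f => ((MA i f : ℝ) : ℂ) : Tensor (Fin n) m) (fun j => ((x j : ℝ) : ℂ)) i
      = ((rApp MA x i : ℝ) : ℂ) := by
  unfold tApp rApp
  push_cast
  rfl

theorem abs_tApp_le (C : Tensor (Fin n) m) (w : Fin n → ℂ) (i : Fin n) :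
    ‖tApp C w i‖
      ≤ rApp (fun i f => ‖C i f‖) (fun j => ‖w j‖) i := by
  unfold tApp rApp
  refine le_trans (norm_sum_le _ _) (le_of_eq (Finset.sum_congr rfl fun f _ => ?_))
  rw [norm_mul, norm_prod]

theorem specRad_bddAbove (hm : 2 ≤ m) (hn : 0 < n) (C : Tensor (Fin n) m) :
    BddAbove ((fun z : ℂ => ‖z‖) '' Eigenvalues C) := by
  refine ⟨Finset.univ.sup' (Finset.univ_nonempty_iff.2 ⟨⟨0,hn⟩⟩)
    (fun i => ∑ f : Fin (m-1) → Fin n, ‖C i f‖), ?_⟩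
  rintro v ⟨l, ⟨w, hw0, hw⟩, rfl⟩
  have hwex : ∃ i, w i ≠ 0 := by
    by_contra hc
    push_neg at hc
    exact hw0 (funext fun i => hc i)
  obtain ⟨i1, hi1⟩ := hwex
  obtain ⟨i0, -, hi0⟩ := Finset.exists_max_image Finset.univ (fun i => ‖w i‖)
    ⟨⟨0, hn⟩, Finset.mem_univ _⟩
  have habs : 0 < ‖w i0‖ :=
    lt_of_lt_of_le (by simpa [norm_pos_iff] using hi1) (hi0 i1 (Finset.mem_univ i1))
  have h1 : ‖l‖ * ‖w i0‖ ^ (m-1)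
      ≤ (∑ f : Fin (m-1) → Fin n, ‖C i0 f‖) * ‖w i0‖ ^ (m-1) := by
    have e1 : ‖l‖ * ‖w i0‖ ^ (m-1) = ‖tApp C w i0‖ := by
      rw [hw i0, norm_mul, norm_pow]
    rw [e1]
    refine le_trans (abs_tApp_le C w i0) ?_
    rw [Finset.sum_mul]
    unfold rApp
    refine Finset.sum_le_sum fun f _ => mul_le_mul_of_nonneg_left ?_ (norm_nonneg _)
    exact prod_le_pow_max (fun i => norm_nonneg _)
      (fun i => hi0 i (Finset.mem_univ i)) f
  have h2 : ‖l‖ ≤ ∑ f : Fin (m-1) → Fin n, ‖C i0 f‖ :=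
    le_of_mul_le_mul_right h1 (pow_pos habs _)
  exact le_trans h2 (Finset.le_sup'
    (fun i => ∑ f : Fin (m-1) → Fin n, ‖C i f‖) (Finset.mem_univ i0))

end YangYangAux

/-- Yang–Yang: if `|B| ≤ A` entrywise with `A` nonnegative then `ρ(B) ≤ ρ(A)`; and if `A` is
weakly irreducible with `ρ(B) = ρ(A)` and `λ = ρ(A)e^{iθ}` is an eigenvalue of `B` with
eigenvector `y`, then `y` has no zero entry and `A = e^{-iθ} D^{-(m-1)} B D` with
`D = diag(yᵢ/|yᵢ|)`. -/
theorem stmt4 {n m : ℕ} (hm : 2 ≤ m) (A B : Tensor (Fin n) m)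
    (hA : Nonneg A) (hle : ∀ i f, ‖B i f‖ ≤ (A i f).re) :
    specRad B ≤ specRad A ∧
    (WeaklyIrreducible A → specRad B = specRad A →
      ∀ (θ : ℝ) (y : Fin n → ℂ),
        IsEigPair B (((specRad A : ℝ) : ℂ) * Complex.exp ((θ : ℂ) * Complex.I)) y →
        (∀ i, y i ≠ 0) ∧
        ∀ i f, A i f = Complex.exp (-(θ : ℂ) * Complex.I) *
          diagConj (fun i => y i / (‖y i‖ : ℂ)) B i f) := by
  classical
  rcases Nat.eq_zero_or_pos n with hn | hn
  · subst hn
    have hEB : Eigenvalues B = ∅ :=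
      Set.eq_empty_iff_forall_notMem.2 fun l ⟨x, hx0, _⟩ => hx0 (funext fun i => i.elim0)
    have hEA : Eigenvalues A = ∅ :=
      Set.eq_empty_iff_forall_notMem.2 fun l ⟨x, hx0, _⟩ => hx0 (funext fun i => i.elim0)
    constructor
    · rw [specRad, specRad, hEA, hEB]
    · intro _ _ θ y hy
      exact absurd (funext fun i => i.elim0 : y = 0) hy.1
  -- setup: the real comparison tensor
  set MA : Fin n → (Fin (m-1) → Fin n) → ℝ := fun i f => (A i f).re with hMAdef
  have hAe : ∀ i f, A i f = ((MA i f : ℝ) : ℂ) := by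
    intro i f
    obtain ⟨r, hr0, hre⟩ := hA i f
    show A i f = (((A i f).re : ℝ) : ℂ)
    rw [hre]
    simp
  have hMA0 : ∀ i f, 0 ≤ MA i f := by
    intro i f
    obtain ⟨r, hr0, hre⟩ := hA i f
    show (0:ℝ) ≤ (A i f).re
    rw [hre]
    simpa using hr0
  have hBle : ∀ i f, ‖B i f‖ ≤ MA i f := hle
  obtain ⟨x, lam, hx0, hxsum, hlam0, heig, hcw, hpos⟩ := PFAux.mainPF hm hn hMA0
  -- lam is an eigenvalue of A
  have hxC : (fun j => ((x j : ℝ) : ℂ)) ≠ 0 := by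
    intro hc
    have : ∀ j, x j = 0 := fun j => by
      have h := congrFun hc j
      simp only [Pi.zero_apply] at h
      exact_mod_cast h
    rw [Finset.sum_eq_zero fun j _ => this j] at hxsum
    norm_num at hxsum
  have hEig : ((lam : ℝ) : ℂ) ∈ Eigenvalues A := by
    refine ⟨fun j => ((x j : ℝ) : ℂ), hxC, fun i => ?_⟩
    have h1 : tApp A (fun j => ((x j : ℝ) : ℂ)) i = ((PFAux.rApp MA x i : ℝ) : ℂ) := by
      have := tApp_coe MA x i
      rw [← this]
      congr 1
      funext i f
      exact hAe i f
    rw [h1, heig i]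
    push_cast
    ring
  have hbddA := specRad_bddAbove hm hn A
  have hbddB := specRad_bddAbove hm hn B
  -- all eigenvalues of dominated tensors are bounded by lam
  have habs_le : ∀ (C : Tensor (Fin n) m), (∀ i f, ‖C i f‖ ≤ MA i f) →
      ∀ l ∈ Eigenvalues C, ‖l‖ ≤ lam := by
    rintro C hC l ⟨w, hw0, hw⟩
    have hwex : ∃ i, w i ≠ 0 := by
      by_contra hc
      push_neg at hc
      exact hw0 (funext fun i => hc i)
    obtain ⟨i1, hi1⟩ := hwex
    refine hcw (‖l‖) (fun i => ‖w i‖)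
      ⟨norm_nonneg _, fun i => norm_nonneg _,
        ⟨i1, by simpa [norm_pos_iff] using hi1⟩, fun i => ?_⟩
    have e1 : ‖l‖ * ‖w i‖ ^ (m-1) = ‖tApp C w i‖ := by
      rw [hw i, norm_mul, norm_pow]
    rw [e1]
    refine le_trans (abs_tApp_le C w i) ?_
    exact PFAux.rApp_mono_M hC (fun j => norm_nonneg _) i
  have hAabs : ∀ i f, ‖A i f‖ ≤ MA i f := by
    intro i f
    rw [hAe i f, Complex.norm_of_nonneg (hMA0 i f)]
  have hspecA : specRad A = lam := by
    refine le_antisymm (Real.sSup_le ?_ hlam0) ?_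
    · rintro v ⟨l, hl, rfl⟩
      exact habs_le A hAabs l hl
    · refine le_csSup hbddA ⟨((lam : ℝ) : ℂ), hEig, ?_⟩
      exact Complex.norm_of_nonneg hlam0
  constructor
  · rw [hspecA]
    refine Real.sSup_le ?_ hlam0
    rintro v ⟨l, hl, rfl⟩
    exact habs_le B hBle l hl
  · intro hwi _ θ y hey
    obtain ⟨hy0, heigy⟩ := hey
    have hwiM : ∀ i j : Fin n, Relation.ReflTransGen
        (fun a b => ∃ f, MA a f ≠ 0 ∧ ∃ k, f k = b) i j := by
      intro i j
      refine Relation.ReflTransGen.mono ?_ _ _ (hwi i j)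
      rintro a b ⟨f, hf, k, hk⟩
      refine ⟨f, ?_, k, hk⟩
      intro h0
      apply hf
      rw [hAe a f, h0]
      norm_num
    have hz : ∀ i, 0 < x i := hpos hwiM
    set u : Fin n → ℝ := fun i => ‖y i‖ with hudef
    have hu0 : ∀ i, 0 ≤ u i := fun i => norm_nonneg _
    have hyex : ∃ i, y i ≠ 0 := by
      by_contra hc
      push_neg at hc
      exact hy0 (funext fun i => hc i)
    obtain ⟨iy, hiy⟩ := hyex
    have hucw : ∀ i, lam * u i ^ (m-1) ≤ PFAux.rApp MA u i := by
      intro i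
      have e1 : ‖tApp B y i‖ = lam * u i ^ (m-1) := by
        rw [heigy i, norm_mul, norm_mul, norm_pow, Complex.norm_real,
          Complex.norm_exp_ofReal_mul_I, hspecA, Real.norm_eq_abs, abs_of_nonneg hlam0, mul_one]
      rw [← e1]
      exact le_trans (abs_tApp_le B y i) (PFAux.rApp_mono_M hBle hu0 i)
    -- maximal ratio
    obtain ⟨i1, -, hi1⟩ := Finset.exists_max_image Finset.univ (fun i => u i / x i)
      ⟨⟨0, hn⟩, Finset.mem_univ _⟩
    set s : ℝ := u i1 / x i1 with hsdef
    have hus : ∀ j, u j ≤ s * x j := by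
      intro j
      have h := hi1 j (Finset.mem_univ j)
      calc u j = u j / x j * x j := (div_mul_cancel₀ _ (ne_of_gt (hz j))).symm
        _ ≤ s * x j := mul_le_mul_of_nonneg_right h (le_of_lt (hz j))
    have hspos : 0 < s := by
      by_contra hc
      push_neg at hc
      have h1 : 0 < u iy := norm_pos_iff.2 hiy
      have h2 := hus iy
      nlinarith [hz iy]
    -- membership in the equality set propagates along arcs
    have hTmem : ∀ i, u i = s * x i →
        (∀ f, MA i f ≠ 0 → ∀ k, u (f k) = s * x (f k)) ∧
          PFAux.rApp MA u i = lam * u i ^ (m-1) := by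
      intro i hiT
      have c1 : lam * u i ^ (m-1) ≤ PFAux.rApp MA u i := hucw i
      have c2 : PFAux.rApp MA u i ≤ PFAux.rApp MA (fun j => s * x j) i :=
        PFAux.rApp_mono_x hMA0 hu0 hus i
      have c3 : PFAux.rApp MA (fun j => s * x j) i = s ^ (m-1) * (lam * x i ^ (m-1)) := by
        rw [PFAux.rApp_smul, heig i]
      have c4 : s ^ (m-1) * (lam * x i ^ (m-1)) = lam * u i ^ (m-1) := by
        rw [hiT]
        ring
      have hall : PFAux.rApp MA u i = PFAux.rApp MA (fun j => s * x j) i := by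
        refine le_antisymm c2 ?_
        rw [c3, c4]
        exact c1
      have heq2 : PFAux.rApp MA u i = lam * u i ^ (m-1) := by rw [hall, c3, c4]
      refine ⟨?_, heq2⟩
      intro f hf k
      have hsub : ∑ g : Fin (m-1) → Fin n,
          (MA i g * ∏ j, (s * x (g j)) - MA i g * ∏ j, u (g j)) = 0 := by
        rw [Finset.sum_sub_distrib]
        have e : (∑ g : Fin (m-1) → Fin n, MA i g * ∏ j, (s * x (g j)))
            = PFAux.rApp MA (fun j => s * x j) i := rfl
        have e2 : (∑ g : Fin (m-1) → Fin n, MA i g * ∏ j, u (g j))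
            = PFAux.rApp MA u i := rfl
        rw [e, e2, ← hall, sub_self]
      have hterm0 : MA i f * ∏ j, (s * x (f j)) - MA i f * ∏ j, u (f j) = 0 := by
        refine (Finset.sum_eq_zero_iff_of_nonneg fun g _ => ?_).1 hsub f (Finset.mem_univ f)
        rw [← mul_sub]
        refine mul_nonneg (hMA0 i g) (sub_nonneg.2 ?_)
        exact Finset.prod_le_prod (fun j _ => hu0 _) (fun j _ => hus _)
      have hprode : ∏ j, u (f j) = ∏ j, (s * x (f j)) := by
        rw [← mul_sub] at hterm0
        rcases mul_eq_zero.1 hterm0 with h | h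
        · exact absurd h hf
        · exact (sub_eq_zero.1 h).symm
      exact PFAux.prod_factors_eq (fun j => hu0 _) (fun j => hus _)
        (fun j => mul_pos hspos (hz _)) hprode k
    have hT : ∀ j, u j = s * x j := by
      intro j
      have hbase : u i1 = s * x i1 := by
        rw [hsdef]
        exact (div_mul_cancel₀ _ (ne_of_gt (hz i1))).symm
      have hpath := hwiM i1 j
      induction hpath with
      | refl => exact hbase
      | tail hp harc ih =>
        obtain ⟨f, hf, k, hk⟩ := harc
        have := (hTmem _ ih).1 f hf k
        rw [hk] at this
        exact this
    have hupos : ∀ i, 0 < u i := fun i => by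
      rw [hT i]
      exact mul_pos hspos (hz i)
    have hyne : ∀ i, y i ≠ 0 := by
      intro i h
      have h2 := hupos i
      rw [hudef] at h2
      simp only [h] at h2
      simp at h2
    have hueig : ∀ i, PFAux.rApp MA u i = lam * u i ^ (m-1) := fun i => (hTmem i (hT i)).2
    refine ⟨hyne, ?_⟩
    intro i f
    have hprodu : ∀ g : Fin (m-1) → Fin n, (0:ℝ) < ∏ j, u (g j) :=
      fun g => Finset.prod_pos fun j _ => hupos (g j)
    -- entrywise |B| = A
    have habsB : ∀ g, ‖B i g‖ = MA i g := by
      have hge1 : lam * u i ^ (m-1)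
          ≤ PFAux.rApp (fun i f => ‖B i f‖) u i := by
        have e1 : ‖tApp B y i‖ = lam * u i ^ (m-1) := by
          rw [heigy i, norm_mul, norm_mul, norm_pow, Complex.norm_real,
            Complex.norm_exp_ofReal_mul_I, hspecA, Real.norm_eq_abs, abs_of_nonneg hlam0, mul_one]
        rw [← e1]
        exact abs_tApp_le B y i
      have hle1 : PFAux.rApp (fun i f => ‖B i f‖) u i ≤ PFAux.rApp MA u i :=
        PFAux.rApp_mono_M hBle hu0 i
      have heqB : PFAux.rApp (fun i f => ‖B i f‖) u i = PFAux.rApp MA u i := by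
        refine le_antisymm hle1 ?_
        rw [hueig i]
        exact hge1
      intro g
      have hsub : ∑ g' : Fin (m-1) → Fin n,
          (MA i g' * ∏ j, u (g' j) - ‖B i g'‖ * ∏ j, u (g' j)) = 0 := by
        rw [Finset.sum_sub_distrib]
        have e : (∑ g' : Fin (m-1) → Fin n, MA i g' * ∏ j, u (g' j)) = PFAux.rApp MA u i := rfl
        have e2 : (∑ g' : Fin (m-1) → Fin n, ‖B i g'‖ * ∏ j, u (g' j))
            = PFAux.rApp (fun i f => ‖B i f‖) u i := rfl
        rw [e, e2, heqB, sub_self]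
      have hterm0 : MA i g * ∏ j, u (g j) - ‖B i g‖ * ∏ j, u (g j) = 0 := by
        refine (Finset.sum_eq_zero_iff_of_nonneg fun g' _ => ?_).1 hsub g (Finset.mem_univ g)
        rw [← sub_mul]
        exact mul_nonneg (sub_nonneg.2 (hBle i g')) (le_of_lt (hprodu g'))
      rw [← sub_mul] at hterm0
      rcases mul_eq_zero.1 hterm0 with h | h
      · linarith [sub_eq_zero.1 h]
      · exact absurd h (ne_of_gt (hprodu g))
    -- phase alignment
    set d : Fin n → ℂ := fun i => y i / ((u i : ℝ) : ℂ) with hddef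
    have huC : ∀ i, ((u i : ℝ) : ℂ) ≠ 0 := fun i => by
      exact_mod_cast ne_of_gt (hupos i)
    have hdne : ∀ i, d i ≠ 0 := fun i => div_ne_zero (hyne i) (huC i)
    have hyd : ∀ i, y i = ((u i : ℝ) : ℂ) * d i := fun i => by
      rw [hddef]
      rw [mul_div_assoc', mul_comm, mul_div_assoc, div_self (huC i), mul_one]
    have habsd : ∀ i, ‖d i‖ = 1 := by
      intro i
      rw [hddef]
      simp only [norm_div, Complex.norm_real, Real.norm_eq_abs, abs_of_nonneg (hu0 i)]
      show ‖y i‖ / u i = 1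
      rw [div_self (ne_of_gt (hupos i))]
    set c : ℂ := Complex.exp (-(θ:ℂ) * Complex.I) * ((d i)⁻¹) ^ (m-1) with hcdef
    have habsc : ‖c‖ = 1 := by
      rw [hcdef, norm_mul, norm_pow, norm_inv, habsd i, inv_one, one_pow, mul_one,
        show -(θ:ℂ) = ((-θ : ℝ) : ℂ) by push_cast; ring, Complex.norm_exp_ofReal_mul_I]
    have hexpm : Complex.exp (-(θ:ℂ) * Complex.I) * Complex.exp ((θ:ℂ) * Complex.I) = 1 := by
      rw [← Complex.exp_add, show -(θ:ℂ) * Complex.I + (θ:ℂ) * Complex.I = 0 by ring,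
        Complex.exp_zero]
    have hdinv : ((d i)⁻¹) ^ (m-1) * (d i) ^ (m-1) = 1 := by
      rw [← mul_pow, inv_mul_cancel₀ (hdne i), one_pow]
    have hcsum : c * tApp B y i = ((lam * u i ^ (m-1) : ℝ) : ℂ) := by
      have hyi : y i ^ (m-1) = ((u i : ℝ) : ℂ) ^ (m-1) * d i ^ (m-1) := by
        rw [hyd i, mul_pow]
      rw [heigy i, hyi]
      have hsA : ((specRad A : ℝ) : ℂ) = ((lam : ℝ) : ℂ) := by
        rw [hspecA]
      rw [hsA]
      have expand : c * (((lam : ℝ) : ℂ) * Complex.exp ((θ:ℂ) * Complex.I) *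
          (((u i : ℝ) : ℂ) ^ (m-1) * d i ^ (m-1)))
          = (Complex.exp (-(θ:ℂ) * Complex.I) * Complex.exp ((θ:ℂ) * Complex.I)) *
            (((d i)⁻¹) ^ (m-1) * (d i) ^ (m-1)) *
            (((lam : ℝ) : ℂ) * ((u i : ℝ) : ℂ) ^ (m-1)) := by
        rw [hcdef]
        ring
      rw [expand, hexpm, hdinv, one_mul, one_mul]
      push_cast
      ring
    have habsterm : ∀ g : Fin (m-1) → Fin n,
        ‖c * (B i g * ∏ j, y (g j))‖ = MA i g * ∏ j, u (g j) := by
      intro g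
      rw [norm_mul, habsc, one_mul, norm_mul, habsB g, norm_prod]
    have hsums : ∑ g : Fin (m-1) → Fin n,
        (MA i g * ∏ j, u (g j) - (c * (B i g * ∏ j, y (g j))).re) = 0 := by
      rw [Finset.sum_sub_distrib]
      have e1 : ∑ g : Fin (m-1) → Fin n, (c * (B i g * ∏ j, y (g j))).re
          = (c * tApp B y i).re := by
        rw [tApp, Finset.mul_sum, Complex.re_sum]
      have e3 : (∑ g : Fin (m-1) → Fin n, MA i g * ∏ j, u (g j)) = PFAux.rApp MA u i := rfl
      rw [e1, hcsum, e3, hueig i, Complex.ofReal_re, sub_self]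
    have hterm_nonneg : ∀ g : Fin (m-1) → Fin n,
        0 ≤ MA i g * ∏ j, u (g j) - (c * (B i g * ∏ j, y (g j))).re := by
      intro g
      have h1 := Complex.re_le_norm (c * (B i g * ∏ j, y (g j)))
      rw [habsterm g] at h1
      linarith
    have hzero := (Finset.sum_eq_zero_iff_of_nonneg fun g _ => hterm_nonneg g).1 hsums f
      (Finset.mem_univ f)
    have hre : (c * (B i f * ∏ j, y (f j))).re = MA i f * ∏ j, u (f j) := by linarith [hzero]
    have key : c * (B i f * ∏ j, y (f j)) = ((MA i f * ∏ j, u (f j) : ℝ) : ℂ) := by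
      set w : ℂ := c * (B i f * ∏ j, y (f j)) with hwdef
      have habsw : ‖w‖ = MA i f * ∏ j, u (f j) := habsterm f
      have hsq := Complex.sq_norm w
      rw [Complex.normSq_apply, habsw] at hsq
      have hrr : w.re * w.re = (MA i f * ∏ j, u (f j)) ^ 2 := by rw [hre]; ring
      have him2 : w.im * w.im = 0 := by linarith [hsq, hrr]
      have him : w.im = 0 := mul_self_eq_zero.1 him2
      apply Complex.ext
      · rw [hre, Complex.ofReal_re]
      · rw [him, Complex.ofReal_im]
    -- conclude
    have hy_prod : ∏ j, y (f j) = ((∏ j, u (f j) : ℝ) : ℂ) * ∏ j, d (f j) := by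
      push_cast
      rw [← Finset.prod_mul_distrib]
      exact Finset.prod_congr rfl fun j _ => hyd (f j)
    have hprodC : ((∏ j, u (f j) : ℝ) : ℂ) ≠ 0 := by
      exact_mod_cast ne_of_gt (hprodu f)
    have hfun : (fun i0 => y i0 / ((‖y i0‖ : ℝ) : ℂ)) = d := by
      funext j
      rw [hddef]
    rw [hAe i f]
    clear_value c d
    have hgoal : ((MA i f : ℝ) : ℂ) = c * B i f * ∏ j, d (f j) := by
      refine mul_right_cancel₀ hprodC ?_
      calc ((MA i f : ℝ) : ℂ) * ((∏ j, u (f j) : ℝ) : ℂ)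
          = ((MA i f * ∏ j, u (f j) : ℝ) : ℂ) := by push_cast; ring
        _ = c * (B i f * ∏ j, y (f j)) := key.symm
        _ = c * B i f * (((∏ j, u (f j) : ℝ) : ℂ) * ∏ j, d (f j)) := by rw [hy_prod]; ring
        _ = c * B i f * (∏ j, d (f j)) * ((∏ j, u (f j) : ℝ) : ℂ) := by ring
    rw [hgoal, hcdef]
    show Complex.exp (-(θ:ℂ) * Complex.I) * (d i)⁻¹ ^ (m-1) * B i f * ∏ j, d (f j)
      = Complex.exp (-(θ:ℂ) * Complex.I) * ((d i)⁻¹ ^ (m-1) * B i f * ∏ j, d (f j))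
    ring

end PaperTensor
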